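/- Let k be a kernel satisfying (A1) and (A2), suppose k(s) > 0 for at least one s ≥ 2, and suppose ℛ₀ := ∑_{t=1}^∞ k(t) < 1. If ρ > 0 is a real number such that the series k̄(ρ) = ∑_{s=1}^∞ k(s) ρ^{−s} converges and equals 1, then ℛ₀ < ρ < 1. -/

import Mathlib

/-- If `ℛ₀ < 1` (and the kernel is not concentrated at `s = 1`), any positive real
solution `ρ` of the Euler–Lotka equation `∑_{s=1}^∞ k(s) ρ⁻ˢ = 1` satisfies
`ℛ₀ < ρ < 1`. -/
theorem euler_lotka_subcritical
    (k : ℕ → ℝ) (ρ : ℝ)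
    (hk0 : k 0 = 0)
    (hA1 : ∀ t, 0 ≤ k t) (hA1' : ∃ t, 0 < k t)
    (hA2 : Summable k)
    (hk2 : ∃ s, 2 ≤ s ∧ 0 < k s)
    (hR0 : (∑' t : ℕ, k t) < 1)
    (hρ : 0 < ρ) (hEL : HasSum (fun s : ℕ => k s * ρ⁻¹ ^ s) 1) :
    (∑' t : ℕ, k t) < ρ ∧ ρ < 1 := by
  have hρ1 : ρ < 1 := by
    by_contra h
    push_neg at h
    have hinv1 : ρ⁻¹ ≤ 1 := inv_le_one_of_one_le₀ h
    have hinv0 : 0 ≤ ρ⁻¹ := inv_nonneg.mpr hρ.le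
    have hle : ∀ s : ℕ, k s * ρ⁻¹ ^ s ≤ k s := by
      intro s
      have : ρ⁻¹ ^ s ≤ 1 := pow_le_one₀ hinv0 hinv1
      nlinarith [hA1 s]
    have := Summable.tsum_le_tsum hle hEL.summable hA2
    rw [hEL.tsum_eq] at this
    linarith
  refine ⟨?_, hρ1⟩
  have hinv1 : 1 < ρ⁻¹ := (one_lt_inv₀ hρ).mpr hρ1
  obtain ⟨s₀, hs₀, hks₀⟩ := hk2
  have hle : ∀ s : ℕ, k s * ρ⁻¹ ≤ k s * ρ⁻¹ ^ s := by
    intro s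
    rcases Nat.eq_zero_or_pos s with h | h
    · subst h; simp [hk0]
    · have : ρ⁻¹ ^ 1 ≤ ρ⁻¹ ^ s := pow_le_pow_right₀ hinv1.le h
      rw [pow_one] at this
      nlinarith [hA1 s]
  have hstrict : k s₀ * ρ⁻¹ < k s₀ * ρ⁻¹ ^ s₀ := by
    have : ρ⁻¹ ^ 1 < ρ⁻¹ ^ s₀ := pow_lt_pow_right₀ hinv1 (by omega)
    rw [pow_one] at this
    nlinarith
  have hsum1 : Summable (fun s : ℕ => k s * ρ⁻¹) := hA2.mul_right _
  have hlt : (∑' s : ℕ, k s * ρ⁻¹) < ∑' s : ℕ, k s * ρ⁻¹ ^ s :=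
    Summable.tsum_lt_tsum hle hstrict hsum1 hEL.summable
  rw [hEL.tsum_eq, tsum_mul_right] at hlt
  have := (div_lt_one hρ).mp (by rwa [div_eq_mul_inv])
  exact this
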